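/- The E8 lattice Λ (defined with half-integer glue vectors as above) is self-dual: a vector v ∈ ℚ^Π lies in Λ if and only if ⟨v, w⟩ ∈ ℤ for all w ∈ Λ. -/
import Mathlib


/-- The E8 lattice inside ℚ^Π for Π = Fin 8: vectors whose coordinate sum is even
and whose coordinates are all integers or all half-integers. -/
def E8Lattice : Set (Fin 8 → ℚ) :=
  {v | (∃ m : ℤ, ∑ i, v i = 2 * m) ∧
    ((∀ i, ∃ n : ℤ, v i = n) ∨ (∀ i, ∃ n : ℤ, v i = n + 1/2))}

private lemma sum_const_eight (c : ℚ) : ∑ _i : Fin 8, c = 8 * c := by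
  simp [Finset.sum_const, Finset.card_univ]

theorem e8_is_self_dual (v : Fin 8 → ℚ) :
    v ∈ E8Lattice ↔ ∀ w ∈ E8Lattice, ∃ n : ℤ, ∑ i, v i * w i = n := by
  constructor
  · rintro ⟨⟨m, hm⟩, hv⟩ w ⟨⟨m', hm'⟩, hw⟩
    rcases hv with hv | hv <;> rcases hw with hw | hw
    · choose a ha using hv
      choose b hb using hw
      refine ⟨∑ i, a i * b i, ?_⟩
      push_cast
      exact Finset.sum_congr rfl (fun i _ => by rw [ha i, hb i])
    · choose a ha using hv
      choose b hb using hw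
      refine ⟨∑ i, a i * b i + m, ?_⟩
      have key : ∀ i, v i * w i = (a i : ℚ) * b i + v i * (1/2) := by
        intro i; rw [ha i, hb i]; ring
      calc ∑ i, v i * w i
          = ∑ i, ((a i : ℚ) * b i + v i * (1/2)) :=
            Finset.sum_congr rfl (fun i _ => key i)
        _ = (∑ i, (a i : ℚ) * b i) + (∑ i, v i) * (1/2) := by
            rw [Finset.sum_add_distrib, Finset.sum_mul]
        _ = ((∑ i, a i * b i + m : ℤ) : ℚ) := by rw [hm]; push_cast; ring
    · choose a ha using hv
      choose b hb using hw
      refine ⟨∑ i, a i * b i + m', ?_⟩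
      have key : ∀ i, v i * w i = (a i : ℚ) * b i + w i * (1/2) := by
        intro i; rw [ha i, hb i]; ring
      calc ∑ i, v i * w i
          = ∑ i, ((a i : ℚ) * b i + w i * (1/2)) :=
            Finset.sum_congr rfl (fun i _ => key i)
        _ = (∑ i, (a i : ℚ) * b i) + (∑ i, w i) * (1/2) := by
            rw [Finset.sum_add_distrib, Finset.sum_mul]
        _ = ((∑ i, a i * b i + m' : ℤ) : ℚ) := by rw [hm']; push_cast; ring
    · choose a ha using hv
      choose b hb using hw
      refine ⟨∑ i, a i * b i + m + m' - 2, ?_⟩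
      have key : ∀ i, v i * w i =
          (a i : ℚ) * b i + v i * (1/2) + w i * (1/2) - 1/4 := by
        intro i; rw [ha i, hb i]; ring
      calc ∑ i, v i * w i
          = ∑ i, ((a i : ℚ) * b i + v i * (1/2) + w i * (1/2) - 1/4) :=
            Finset.sum_congr rfl (fun i _ => key i)
        _ = ((∑ i, ((a i : ℚ) * b i + v i * (1/2) + w i * (1/2)))
              - ∑ _i : Fin 8, (1/4 : ℚ)) := by rw [Finset.sum_sub_distrib]
        _ = (∑ i, (a i : ℚ) * b i) + (∑ i, v i) * (1/2) + (∑ i, w i) * (1/2)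
              - ∑ _i : Fin 8, (1/4 : ℚ) := by
            rw [Finset.sum_add_distrib, Finset.sum_add_distrib,
              Finset.sum_mul, Finset.sum_mul]
        _ = ((∑ i, a i * b i + m + m' - 2 : ℤ) : ℚ) := by
            rw [hm, hm', sum_const_eight]; push_cast; ring
  · intro hdual
    -- pairing with e_i + e_j
    have hpair : ∀ i j : Fin 8, ∃ n : ℤ, v i + v j = n := by
      intro i j
      have hw : (fun k => (if k = i then (1:ℚ) else 0) + (if k = j then 1 else 0))
          ∈ E8Lattice := by
        constructor
        · refine ⟨1, ?_⟩
          rw [Finset.sum_add_distrib]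
          simp
          norm_num
        · left
          intro k
          dsimp only
          split_ifs
          · exact ⟨2, by norm_num⟩
          · exact ⟨1, by norm_num⟩
          · exact ⟨1, by norm_num⟩
          · exact ⟨0, by norm_num⟩
      obtain ⟨n, hn⟩ := hdual _ hw
      refine ⟨n, ?_⟩
      rw [← hn]
      have : ∀ k : Fin 8, v k * ((if k = i then (1:ℚ) else 0) + (if k = j then 1 else 0))
          = (if k = i then v k else 0) + (if k = j then v k else 0) := by
        intro k; split_ifs <;> ring
      rw [Finset.sum_congr rfl (fun k _ => this k), Finset.sum_add_distrib]
      simp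
    -- pairing with all-halves vector
    have hhalf : ∃ n : ℤ, ∑ i, v i = 2 * n := by
      have hw : (fun _ : Fin 8 => (1/2 : ℚ)) ∈ E8Lattice := by
        refine ⟨⟨2, by rw [sum_const_eight]; norm_num⟩, Or.inr fun i => ⟨0, by norm_num⟩⟩
      obtain ⟨n, hn⟩ := hdual _ hw
      refine ⟨n, ?_⟩
      rw [← Finset.sum_mul] at hn
      linarith
    refine ⟨hhalf, ?_⟩
    obtain ⟨n0, hn0⟩ := hpair 0 0
    rcases Int.even_or_odd n0 with ⟨k, hk⟩ | ⟨k, hk⟩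
    · left
      intro i
      obtain ⟨m, hm⟩ := hpair 0 i
      refine ⟨m - k, ?_⟩
      have hk' : (n0 : ℚ) = k + k := by exact_mod_cast hk
      push_cast
      linarith
    · right
      intro i
      obtain ⟨m, hm⟩ := hpair 0 i
      refine ⟨m - k - 1, ?_⟩
      have hk' : (n0 : ℚ) = 2 * k + 1 := by exact_mod_cast hk
      push_cast
      linarith
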